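/- Let y in R^d and x be jointly distributed random variables, with y square-integrable, E[y|x] = 0 almost surely, and conditional second moment S(x) = E[yy^T | x] positive definite almost surely. Then the functional C -> E[y^T C(x)^{-1} y + log det(C(x))], over measurable functions C mapping x to positive definite d x d matrices, is minimized by C*(x) = E[yy^T | x], and any minimizer agrees with C* almost surely. -/

import Mathlib

open MeasureTheory Matrix


/-- Matrices are measurable spaces, with the Borel (product) σ-algebra. -/
instance matrixMeasurableSpace {m n : Type*} : MeasurableSpace (Matrix m n ℝ) :=
  inferInstanceAs (MeasurableSpace (m → n → ℝ))

section AuxMatrix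

lemma trace_eq_sum_eig {d : ℕ} {M : Matrix (Fin d) (Fin d) ℝ} (hM : M.IsHermitian) :
    M.trace = ∑ i, hM.eigenvalues i := by
  conv_lhs => rw [hM.spectral_theorem, Unitary.conjStarAlgAut_apply]
  rw [trace_mul_cycle]
  have hU := (Matrix.mem_unitaryGroup_iff').mp (hM.eigenvectorUnitary).2
  rw [hU, one_mul, trace_diagonal]
  simp

open scoped MatrixOrder in
lemma key_matrix {d : ℕ} {C S : Matrix (Fin d) (Fin d) ℝ} (hC : C.PosDef) (hS : S.PosDef) :
    ((d : ℝ) + Real.log S.det ≤ (C⁻¹ * S).trace + Real.log C.det) ∧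
    ((C⁻¹ * S).trace + Real.log C.det = (d : ℝ) + Real.log S.det → C = S) := by
  classical
  set R := CFC.sqrt S with hRdef
  have hRR : R * R = S := CFC.sqrt_mul_sqrt_self S hS.posSemidef.nonneg
  have hRpsd : R.PosSemidef := (CFC.sqrt_nonneg S).posSemidef
  have hRH : R.IsHermitian := hRpsd.1
  have hdetR : R.det * R.det = S.det := by rw [← det_mul, hRR]
  have hdetSpos : 0 < S.det := hS.det_pos
  have hdetCpos : 0 < C.det := hC.det_pos
  have hdetRnn : 0 ≤ R.det := by
    have h1 : R.det = ∏ i, hRH.eigenvalues i := by simpa using hRH.det_eq_prod_eigenvalues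
    rw [h1]
    exact Finset.prod_nonneg fun i _ => hRpsd.eigenvalues_nonneg i
  have hdetRpos : 0 < R.det := by
    rcases hdetRnn.lt_or_eq with h | h
    · exact h
    · exfalso; nlinarith
  set M := Rᴴ * C⁻¹ * R with hMdef
  have hMpsd : M.PosSemidef := hC.inv.posSemidef.conjTranspose_mul_mul_same R
  have hMH : M.IsHermitian := hMpsd.1
  have htrM : M.trace = (C⁻¹ * S).trace := by
    rw [hMdef, hRH.eq, trace_mul_cycle, hRR, trace_mul_comm]
  have hdetM : M.det = S.det / C.det := by
    rw [hMdef, hRH.eq, det_mul, det_mul, det_nonsing_inv, Ring.inverse_eq_inv']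
    field_simp
    nlinarith
  have hdetMpos : 0 < M.det := by rw [hdetM]; positivity
  have heig : ∀ i, 0 < hMH.eigenvalues i := by
    intro i
    rcases (hMpsd.eigenvalues_nonneg i).lt_or_eq with h | h
    · exact h
    · exfalso
      have hd : M.det = ∏ j, hMH.eigenvalues j := by simpa using hMH.det_eq_prod_eigenvalues
      have : M.det = 0 := by
        rw [hd]; exact Finset.prod_eq_zero (Finset.mem_univ i) h.symm
      linarith
  have htr : M.trace = ∑ i, hMH.eigenvalues i := trace_eq_sum_eig hMH
  have hld : Real.log M.det = ∑ i, Real.log (hMH.eigenvalues i) := by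
    have hd : M.det = ∏ j, hMH.eigenvalues j := by simpa using hMH.det_eq_prod_eigenvalues
    rw [hd, Real.log_prod]
    exact fun i _ => (heig i).ne'
  have hterm : ∀ i, Real.log (hMH.eigenvalues i) + 1 ≤ hMH.eigenvalues i := by
    intro i
    have := Real.add_one_le_exp (Real.log (hMH.eigenvalues i))
    rwa [Real.exp_log (heig i)] at this
  have hlogdiv : Real.log M.det = Real.log S.det - Real.log C.det := by
    rw [hdetM, Real.log_div hdetSpos.ne' hdetCpos.ne']
  have hmain : (d : ℝ) ≤ M.trace - Real.log M.det := by
    rw [htr, hld, ← Finset.sum_sub_distrib]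
    have h : (d : ℝ) = ∑ _i : Fin d, (1 : ℝ) := by simp
    rw [h]
    exact Finset.sum_le_sum fun i _ => by linarith [hterm i]
  constructor
  · have h := hmain
    rw [hlogdiv] at h
    rw [← htrM]
    linarith
  · intro heq
    have hsum0 : ∑ i, (hMH.eigenvalues i - Real.log (hMH.eigenvalues i) - 1) = 0 := by
      have h1 : M.trace - Real.log M.det - d = 0 := by
        rw [htrM, hlogdiv]; linarith
      rw [htr, hld] at h1
      rw [Finset.sum_sub_distrib, Finset.sum_sub_distrib]
      simpa using h1
    have hall1 : ∀ i, hMH.eigenvalues i = 1 := by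
      intro i
      by_contra hne
      have hne' : Real.log (hMH.eigenvalues i) ≠ 0 := by
        intro h0
        rcases Real.log_eq_zero.mp h0 with h | h | h
        · exact (heig i).ne' h
        · exact hne h
        · linarith [heig i]
      have hstrict := Real.add_one_lt_exp hne'
      rw [Real.exp_log (heig i)] at hstrict
      have hz := (Finset.sum_eq_zero_iff_of_nonneg
        (fun j _ => by linarith [hterm j] : ∀ j ∈ Finset.univ,
          (0:ℝ) ≤ hMH.eigenvalues j - Real.log (hMH.eigenvalues j) - 1)).mp hsum0 i
        (Finset.mem_univ i)
      linarith [hz]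
    have hM1 : M = 1 := by
      have hsp := hMH.spectral_theorem
      rw [hsp, Unitary.conjStarAlgAut_apply]
      have hdiag : diagonal (RCLike.ofReal ∘ hMH.eigenvalues) = (1 : Matrix (Fin d) (Fin d) ℝ) := by
        have h : (RCLike.ofReal ∘ hMH.eigenvalues : Fin d → ℝ) = fun _ => (1:ℝ) :=
          funext fun i => by simp [hall1 i]
        rw [h, diagonal_one]
      rw [hdiag, mul_one]
      exact (Matrix.mem_unitaryGroup_iff).mp (hMH.eigenvectorUnitary).2
    have hRunit : IsUnit R.det := hdetRpos.ne'.isUnit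
    have hCinv : C⁻¹ = S⁻¹ := by
      have h1 : R * C⁻¹ * R = 1 := by rw [← hM1, hMdef, hRH.eq]
      letI := R.invertibleOfIsUnitDet hRunit
      have h2 : R⁻¹ * R⁻¹ = C⁻¹ := by
        have h3 := congrArg (fun A => R⁻¹ * A * R⁻¹) h1
        simpa [Matrix.mul_assoc, Matrix.inv_mul_cancel_left_of_invertible,
          Matrix.mul_inv_cancel_right_of_invertible, Matrix.mul_one] using h3.symm
      rw [← h2, ← Matrix.mul_inv_rev, hRR]
    calc C = (C⁻¹)⁻¹ := (Matrix.nonsing_inv_nonsing_inv C hdetCpos.ne'.isUnit).symm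
    _ = (S⁻¹)⁻¹ := by rw [hCinv]
    _ = S := Matrix.nonsing_inv_nonsing_inv S hdetSpos.ne'.isUnit

end AuxMatrix

section AuxMeas
variable {𝓧 : Type*} [MeasurableSpace 𝓧] {d : ℕ}

lemma meas_det {M : 𝓧 → Matrix (Fin d) (Fin d) ℝ}
    (hent : ∀ i j, Measurable fun t => M t i j) : Measurable fun t => (M t).det := by
  simp_rw [Matrix.det_apply']
  exact Finset.measurable_sum _ fun σ _ =>
    (Finset.measurable_prod _ fun i _ => hent _ _).const_mul _

lemma meas_entry {M : 𝓧 → Matrix (Fin d) (Fin d) ℝ} (hM : Measurable M) (i j : Fin d) :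
    Measurable fun t => M t i j :=
  (measurable_pi_apply j).comp ((measurable_pi_apply i).comp hM)

lemma meas_inv_entry {M : 𝓧 → Matrix (Fin d) (Fin d) ℝ} (hM : Measurable M) (i j : Fin d) :
    Measurable fun t => (M t)⁻¹ i j := by
  classical
  have hent := meas_entry hM
  have hupd : ∀ a b, Measurable fun t => ((M t).updateRow j (Pi.single i 1)) a b := by
    intro a b
    rcases eq_or_ne a j with h | h
    · simp only [h, Matrix.updateRow_self]
      exact measurable_const
    · simp only [Matrix.updateRow_ne h]
      exact hent a b
  simp_rw [Matrix.inv_def, Matrix.smul_apply, Matrix.adjugate_apply, smul_eq_mul,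
    Ring.inverse_eq_inv']
  exact ((meas_det hent).inv).mul (meas_det hupd)

lemma dot_expand (v : Fin d → ℝ) (A : Matrix (Fin d) (Fin d) ℝ) :
    v ⬝ᵥ (A *ᵥ v) = ∑ i, ∑ j, A i j * (v i * v j) := by
  simp only [dotProduct, Matrix.mulVec]
  refine Finset.sum_congr rfl fun i _ => ?_
  rw [Finset.mul_sum]
  exact Finset.sum_congr rfl fun j _ => by ring

lemma dsum_eq_trace (A B : Matrix (Fin d) (Fin d) ℝ) (hB : B.IsHermitian) :
    ∑ i, ∑ j, A i j * B i j = (A * B).trace := by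
  rw [Matrix.trace]
  simp only [Matrix.diag, Matrix.mul_apply]
  refine Finset.sum_congr rfl fun i _ => Finset.sum_congr rfl fun j _ => ?_
  have hsym : B i j = B j i := by
    conv_rhs => rw [← hB]
    simp [Matrix.conjTranspose_apply]
  rw [hsym]

lemma abs_gsum_bound {d : ℕ} (A B : Matrix (Fin d) (Fin d) ℝ) (r : ℝ)
    (hA : ∀ i j, |A i j| ≤ r) (hB : ∀ i j, |B i j| ≤ r) (L : ℝ) (hL : |L| ≤ r) :
    |(∑ i, ∑ j, A i j * B i j) + L| ≤ (d:ℝ) * d * (r * r) + r := by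
  have hr : 0 ≤ r := le_trans (abs_nonneg _) hL
  have h1 : |∑ i, ∑ j, A i j * B i j| ≤ (d:ℝ) * d * (r * r) := by
    refine le_trans (Finset.abs_sum_le_sum_abs _ _) ?_
    have h2 : ∀ i : Fin d, |∑ j, A i j * B i j| ≤ (d:ℝ) * (r * r) := by
      intro i
      refine le_trans (Finset.abs_sum_le_sum_abs _ _) ?_
      have h3 : ∀ j : Fin d, |A i j * B i j| ≤ r * r := fun j => by
        rw [abs_mul]
        exact mul_le_mul (hA i j) (hB i j) (abs_nonneg _) hr
      calc ∑ j, |A i j * B i j| ≤ ∑ _j : Fin d, r * r :=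
            Finset.sum_le_sum fun j _ => h3 j
      _ = (d:ℝ) * (r * r) := by simp [Finset.sum_const, mul_comm]
    calc ∑ i, |∑ j, A i j * B i j| ≤ ∑ _i : Fin d, (d:ℝ) * (r * r) :=
          Finset.sum_le_sum fun i _ => h2 i
    _ = (d:ℝ) * ((d:ℝ) * (r * r)) := by simp [Finset.sum_const, mul_comm]
    _ = (d:ℝ) * d * (r * r) := by ring
  calc |(∑ i, ∑ j, A i j * B i j) + L| ≤ |∑ i, ∑ j, A i j * B i j| + |L| := abs_add_le _ _
  _ ≤ (d:ℝ) * d * (r * r) + r := add_le_add h1 hL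

end AuxMeas

section Pullout
variable {Ω 𝓧 : Type*} [MeasurableSpace Ω] [MeasurableSpace 𝓧]

lemma pullout (μ : Measure Ω) [IsProbabilityMeasure μ]
    (x : Ω → 𝓧) (hx : Measurable x) (g : Ω → ℝ) (hg : Integrable g μ)
    (σf : 𝓧 → ℝ)
    (hσ : (fun ω => σf (x ω)) =ᵐ[μ] μ[g | MeasurableSpace.comap x inferInstance])
    (a : 𝓧 → ℝ) (ha : Measurable a) (c : ℝ) (hc : ∀ t, |a t| ≤ c) :
    ∫ ω, a (x ω) * g ω ∂μ = ∫ ω, a (x ω) * σf (x ω) ∂μ := by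
  set m := MeasurableSpace.comap x inferInstance with hmdef
  have hm : m ≤ _ := hx.comap_le
  have hxm : Measurable[m] x := Measurable.of_comap_le le_rfl
  have hfm : StronglyMeasurable[m] fun ω => a (x ω) :=
    (ha.comp hxm).stronglyMeasurable
  have hbd : ∀ᵐ ω ∂μ, ‖a (x ω)‖ ≤ c := Filter.Eventually.of_forall fun ω => hc (x ω)
  have h1 : μ[(fun ω => a (x ω)) * g | m] =ᵐ[μ] (fun ω => a (x ω)) * μ[g | m] :=
    condExp_stronglyMeasurable_mul_of_bound (μ := μ) hm hfm hg c hbd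
  have hfg : Integrable ((fun ω => a (x ω)) * g) μ :=
    hg.bdd_mul (hfm.mono hm).aestronglyMeasurable hbd
  calc ∫ ω, a (x ω) * g ω ∂μ = ∫ ω, ((fun ω => a (x ω)) * g) ω ∂μ := rfl
  _ = ∫ ω, (μ[(fun ω => a (x ω)) * g | m]) ω ∂μ :=
      (integral_condExp (μ := μ) (f := (fun ω => a (x ω)) * g) hm).symm
  _ = ∫ ω, ((fun ω => a (x ω)) * μ[g | m]) ω ∂μ := integral_congr_ae h1
  _ = ∫ ω, a (x ω) * σf (x ω) ∂μ := by
      refine integral_congr_ae ?_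
      filter_upwards [hσ] with ω hω
      simp only [Pi.mul_apply]
      rw [← hω]

end Pullout
/-- **Theorem 1 of the paper.** Let `y` be square-integrable with zero conditional mean given
`x`, and let `S(x) = E[yyᵀ|x]` be positive definite a.s. Then over measurable predictors `C(x)`
taking positive definite values (with integrable loss), the expected Gaussian negative
log-likelihood `E[yᵀ C(x)⁻¹ y + log det C(x)]` is minimized by `C = S`, and any minimizer
agrees with `S` almost surely. -/
theorem condCovariance_minimizes_gaussian_nll {Ω 𝓧 : Type*} [MeasurableSpace Ω]
    [MeasurableSpace 𝓧] (μ : Measure Ω) [IsProbabilityMeasure μ] {d : ℕ}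
    (x : Ω → 𝓧) (hx : Measurable x)
    (y : Ω → Fin d → ℝ) (hy : MemLp y 2 μ)
    (hmean : ∀ i, μ[fun ω => y ω i | MeasurableSpace.comap x inferInstance] =ᵐ[μ] 0)
    (S : 𝓧 → Matrix (Fin d) (Fin d) ℝ) (hSmeas : Measurable S)
    (hS : ∀ i j, (fun ω => S (x ω) i j)
      =ᵐ[μ] μ[fun ω => y ω i * y ω j | MeasurableSpace.comap x inferInstance])
    (hSpd : ∀ᵐ ω ∂μ, (S (x ω)).PosDef)
    (hSint : Integrable (fun ω => y ω ⬝ᵥ ((S (x ω))⁻¹ *ᵥ y ω) + Real.log (S (x ω)).det) μ)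
    (C : 𝓧 → Matrix (Fin d) (Fin d) ℝ) (hCmeas : Measurable C)
    (hCpd : ∀ᵐ ω ∂μ, (C (x ω)).PosDef)
    (hCint : Integrable (fun ω => y ω ⬝ᵥ ((C (x ω))⁻¹ *ᵥ y ω) + Real.log (C (x ω)).det) μ) :
    (∫ ω, (y ω ⬝ᵥ ((S (x ω))⁻¹ *ᵥ y ω) + Real.log (S (x ω)).det) ∂μ
      ≤ ∫ ω, (y ω ⬝ᵥ ((C (x ω))⁻¹ *ᵥ y ω) + Real.log (C (x ω)).det) ∂μ) ∧
    ((∫ ω, (y ω ⬝ᵥ ((C (x ω))⁻¹ *ᵥ y ω) + Real.log (C (x ω)).det) ∂μ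
        = ∫ ω, (y ω ⬝ᵥ ((S (x ω))⁻¹ *ᵥ y ω) + Real.log (S (x ω)).det) ∂μ) →
      ∀ᵐ ω ∂μ, C (x ω) = S (x ω)) := by
  classical
  -- component square-integrability and product integrability
  have hyi : ∀ i, MemLp (fun ω => y ω i) 2 μ := by
    intro i
    have h := (ContinuousLinearMap.proj (R := ℝ) (φ := fun _ : Fin d => ℝ) i).comp_memLp' hy
    exact h
  have hyij : ∀ i j, Integrable (fun ω => y ω i * y ω j) μ := by
    intro i j
    have h1 := (hyi i).integrable_sq
    have h2 := (hyi j).integrable_sq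
    have hb : Integrable (fun ω => ((y ω i) ^ 2 + (y ω j) ^ 2) / 2) μ := (h1.add h2).div_const 2
    refine hb.mono' ((hyi i).aestronglyMeasurable.mul (hyi j).aestronglyMeasurable) ?_
    filter_upwards with ω
    rw [Real.norm_eq_abs, abs_mul]
    nlinarith [sq_abs (y ω i), sq_abs (y ω j), sq_nonneg (|y ω i| - |y ω j|),
      abs_nonneg (y ω i), abs_nonneg (y ω j)]
  -- measurability of all entrywise quantities
  have hSent : ∀ i j, Measurable fun t => S t i j := meas_entry hSmeas
  have hCinvE : ∀ i j, Measurable fun t => (C t)⁻¹ i j := meas_inv_entry hCmeas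
  have hSinvE : ∀ i j, Measurable fun t => (S t)⁻¹ i j := meas_inv_entry hSmeas
  have hlogC : Measurable fun t => Real.log (C t).det :=
    Real.measurable_log.comp (meas_det (meas_entry hCmeas))
  have hlogS : Measurable fun t => Real.log (S t).det :=
    Real.measurable_log.comp (meas_det (meas_entry hSmeas))
  -- truncation sets
  set φ : 𝓧 → ℝ := fun t =>
    (∑ i, ∑ j, (|(C t)⁻¹ i j| + |(S t)⁻¹ i j| + |S t i j|))
      + |Real.log (C t).det| + |Real.log (S t).det| with hφdef
  have hφ : Measurable φ := by
    refine (Measurable.add (Measurable.add ?_ hlogC.abs) hlogS.abs)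
    exact Finset.measurable_sum _ fun i _ => Finset.measurable_sum _ fun j _ =>
      ((((hCinvE i j).abs.add (hSinvE i j).abs)).add (hSent i j).abs)
  set T : ℕ → Set 𝓧 := fun n => {t | φ t ≤ n} with hTdef
  have hT : ∀ n, MeasurableSet (T n) := fun n => measurableSet_le hφ measurable_const
  have hTmono : Monotone T := by
    intro a b hab t ht
    have h1 : φ t ≤ (a:ℝ) := ht
    have h2 : (a:ℝ) ≤ (b:ℝ) := by exact_mod_cast hab
    exact le_trans h1 h2
  have hTun : (⋃ n, T n) = Set.univ := by
    ext t
    simp only [Set.mem_iUnion, Set.mem_univ, iff_true, hTdef, Set.mem_setOf_eq]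
    exact exists_nat_ge (φ t)
  have hTbd : ∀ n : ℕ, ∀ t ∈ T n,
      (∀ i j, |(C t)⁻¹ i j| ≤ (n:ℝ)) ∧ (∀ i j, |(S t)⁻¹ i j| ≤ (n:ℝ)) ∧
      (∀ i j, |S t i j| ≤ (n:ℝ)) ∧ |Real.log (C t).det| ≤ (n:ℝ) ∧
      |Real.log (S t).det| ≤ (n:ℝ) := by
    intro n t ht
    have ht' : (∑ i, ∑ j, (|(C t)⁻¹ i j| + |(S t)⁻¹ i j| + |S t i j|))
        + |Real.log (C t).det| + |Real.log (S t).det| ≤ (n:ℝ) := ht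
    have hbig : (0:ℝ) ≤ ∑ i, ∑ j, (|(C t)⁻¹ i j| + |(S t)⁻¹ i j| + |S t i j|) :=
      Finset.sum_nonneg fun i _ => Finset.sum_nonneg fun j _ => by positivity
    have habs : ∀ i j : Fin d, |(C t)⁻¹ i j| + |(S t)⁻¹ i j| + |S t i j|
        ≤ ∑ k, ∑ l, (|(C t)⁻¹ k l| + |(S t)⁻¹ k l| + |S t k l|) := by
      intro i j
      have h3 : |(C t)⁻¹ i j| + |(S t)⁻¹ i j| + |S t i j|
          ≤ ∑ l, (|(C t)⁻¹ i l| + |(S t)⁻¹ i l| + |S t i l|) :=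
        Finset.single_le_sum (f := fun l => |(C t)⁻¹ i l| + |(S t)⁻¹ i l| + |S t i l|)
          (fun l _ => by positivity) (Finset.mem_univ j)
      have h2 : (∑ l, (|(C t)⁻¹ i l| + |(S t)⁻¹ i l| + |S t i l|))
          ≤ ∑ k, ∑ l, (|(C t)⁻¹ k l| + |(S t)⁻¹ k l| + |S t k l|) :=
        Finset.single_le_sum (f := fun k => ∑ l, (|(C t)⁻¹ k l| + |(S t)⁻¹ k l| + |S t k l|))
          (fun k _ => Finset.sum_nonneg fun l _ => by positivity) (Finset.mem_univ i)
      linarith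
    have h4 : (0:ℝ) ≤ |Real.log (C t).det| := abs_nonneg _
    have h5 : (0:ℝ) ≤ |Real.log (S t).det| := abs_nonneg _
    refine ⟨fun i j => ?_, fun i j => ?_, fun i j => ?_, ?_, ?_⟩
    · have h1 := habs i j; have h6 := abs_nonneg ((S t)⁻¹ i j); have h7 := abs_nonneg (S t i j)
      linarith
    · have h1 := habs i j; have h6 := abs_nonneg ((C t)⁻¹ i j); have h7 := abs_nonneg (S t i j)
      linarith
    · have h1 := habs i j; have h6 := abs_nonneg ((C t)⁻¹ i j); have h7 := abs_nonneg ((S t)⁻¹ i j)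
      linarith
    · linarith
    · linarith
  -- generic integrability helpers
  have hint_ax : ∀ (a : 𝓧 → ℝ), Measurable a → ∀ c : ℝ, (∀ t, |a t| ≤ c) →
      ∀ (g : Ω → ℝ), Integrable g μ → Integrable (fun ω => a (x ω) * g ω) μ := by
    intro a ha c hc g hg
    exact hg.bdd_mul ((ha.comp hx).aestronglyMeasurable)
      (Filter.Eventually.of_forall fun ω => by simpa [Real.norm_eq_abs] using hc (x ω))
  have hint_bdd : ∀ (f : 𝓧 → ℝ), Measurable f → ∀ c : ℝ, (∀ t, |f t| ≤ c) →
      Integrable (fun ω => f (x ω)) μ := by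
    intro f hf c hc
    exact (integrable_const c).mono' ((hf.comp hx).aestronglyMeasurable)
      (Filter.Eventually.of_forall fun ω => by simpa [Real.norm_eq_abs] using hc (x ω))
  have hgOn : ∀ (g : 𝓧 → ℝ), Measurable g → ∀ (B : Set 𝓧), MeasurableSet B → ∀ c : ℝ,
      (∀ t ∈ B, |g t| ≤ c) → IntegrableOn (fun ω => g (x ω)) (x ⁻¹' B) μ := by
    intro g hg B hB c hc
    refine (integrable_const c).mono' ((hg.comp hx).aestronglyMeasurable.restrict) ?_
    rw [ae_restrict_iff' (hx hB)]
    filter_upwards with ω hω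
    simpa [Real.norm_eq_abs] using hc _ hω
  -- THE KEY CLAIM: on truncation-bounded sets, the conditional-expectation identity
  have claim : ∀ (D : 𝓧 → Matrix (Fin d) (Fin d) ℝ),
      (∀ i j, Measurable fun t => (D t)⁻¹ i j) →
      (Measurable fun t => Real.log (D t).det) →
      ∀ (B : Set 𝓧), MeasurableSet B → ∀ n : ℕ,
      (∀ t ∈ B, (∀ i j, |(D t)⁻¹ i j| ≤ (n:ℝ)) ∧ (∀ i j, |S t i j| ≤ (n:ℝ)) ∧
        |Real.log (D t).det| ≤ (n:ℝ)) →
      ∫ ω in x ⁻¹' B, (y ω ⬝ᵥ ((D (x ω))⁻¹ *ᵥ y ω) + Real.log (D (x ω)).det) ∂μ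
        = ∫ ω in x ⁻¹' B,
            ((∑ i, ∑ j, (D (x ω))⁻¹ i j * S (x ω) i j) + Real.log (D (x ω)).det) ∂μ := by
    intro D hDinv hDlog B hB n hBn
    set a : Fin d → Fin d → 𝓧 → ℝ := fun i j => B.indicator (fun t => (D t)⁻¹ i j) with hadef
    set ℓ : 𝓧 → ℝ := B.indicator (fun t => Real.log (D t).det) with hldef
    have hameas : ∀ i j, Measurable (a i j) := fun i j => (hDinv i j).indicator hB
    have habd : ∀ i j t, |a i j t| ≤ (n:ℝ) := by
      intro i j t
      by_cases ht : t ∈ B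
      · rw [hadef]; simp only [Set.indicator_of_mem ht]; exact (hBn t ht).1 i j
      · rw [hadef]; simp only [Set.indicator_of_notMem ht]; simp
    have hlmeas : Measurable ℓ := hDlog.indicator hB
    have hlbd : ∀ t, |ℓ t| ≤ (n:ℝ) := by
      intro t
      by_cases ht : t ∈ B
      · rw [hldef]; simp only [Set.indicator_of_mem ht]; exact (hBn t ht).2.2
      · rw [hldef]; simp only [Set.indicator_of_notMem ht]; simp
    have haSbd : ∀ i j t, |a i j t * S t i j| ≤ (n:ℝ) * n := by
      intro i j t
      by_cases ht : t ∈ B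
      · rw [abs_mul]
        exact mul_le_mul (habd i j t) ((hBn t ht).2.1 i j) (abs_nonneg _) (Nat.cast_nonneg n)
      · rw [hadef]; simp only [Set.indicator_of_notMem ht]
        simp only [zero_mul, abs_zero]
        positivity
    have hLfun : (x ⁻¹' B).indicator
        (fun ω => y ω ⬝ᵥ ((D (x ω))⁻¹ *ᵥ y ω) + Real.log (D (x ω)).det)
        = fun ω => (∑ i, ∑ j, a i j (x ω) * (y ω i * y ω j)) + ℓ (x ω) := by
      funext ω
      by_cases hω : x ω ∈ B
      · rw [Set.indicator_of_mem (show ω ∈ x ⁻¹' B from hω)]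
        simp only [hadef, hldef, Set.indicator_of_mem hω]
        rw [dot_expand]
      · rw [Set.indicator_of_notMem (show ω ∉ x ⁻¹' B from hω)]
        simp only [hadef, hldef, Set.indicator_of_notMem hω]
        simp
    have hRfun : (x ⁻¹' B).indicator
        (fun ω => (∑ i, ∑ j, (D (x ω))⁻¹ i j * S (x ω) i j) + Real.log (D (x ω)).det)
        = fun ω => (∑ i, ∑ j, a i j (x ω) * S (x ω) i j) + ℓ (x ω) := by
      funext ω
      by_cases hω : x ω ∈ B
      · rw [Set.indicator_of_mem (show ω ∈ x ⁻¹' B from hω)]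
        simp only [hadef, hldef, Set.indicator_of_mem hω]
      · rw [Set.indicator_of_notMem (show ω ∉ x ⁻¹' B from hω)]
        simp only [hadef, hldef, Set.indicator_of_notMem hω]
        simp
    have hintL : ∀ i j, Integrable (fun ω => a i j (x ω) * (y ω i * y ω j)) μ :=
      fun i j => hint_ax _ (hameas i j) _ (fun t => habd i j t) _ (hyij i j)
    have hintR : ∀ i j, Integrable (fun ω => a i j (x ω) * S (x ω) i j) μ := by
      intro i j
      exact hint_bdd (fun t => a i j t * S t i j) ((hameas i j).mul (hSent i j))
        ((n:ℝ) * n) (fun t => haSbd i j t)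
    have hintl : Integrable (fun ω => ℓ (x ω)) μ := hint_bdd _ hlmeas _ hlbd
    have hintLsum : Integrable (fun ω => ∑ i, ∑ j, a i j (x ω) * (y ω i * y ω j)) μ := by
      apply integrable_finset_sum
      intro i _
      exact integrable_finset_sum _ fun j _ => hintL i j
    have hintRsum : Integrable (fun ω => ∑ i, ∑ j, a i j (x ω) * S (x ω) i j) μ := by
      apply integrable_finset_sum
      intro i _
      exact integrable_finset_sum _ fun j _ => hintR i j
    calc ∫ ω in x ⁻¹' B, (y ω ⬝ᵥ ((D (x ω))⁻¹ *ᵥ y ω) + Real.log (D (x ω)).det) ∂μ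
        = ∫ ω, (x ⁻¹' B).indicator
            (fun ω => y ω ⬝ᵥ ((D (x ω))⁻¹ *ᵥ y ω) + Real.log (D (x ω)).det) ω ∂μ :=
          (integral_indicator (hx hB)).symm
    _ = ∫ ω, ((∑ i, ∑ j, a i j (x ω) * (y ω i * y ω j)) + ℓ (x ω)) ∂μ := by rw [hLfun]
    _ = (∑ i, ∑ j, ∫ ω, a i j (x ω) * (y ω i * y ω j) ∂μ) + ∫ ω, ℓ (x ω) ∂μ := by
        rw [integral_add hintLsum hintl, integral_finset_sum _ (fun i _ =>
          integrable_finset_sum _ fun j _ => hintL i j)]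
        congr 1
        exact Finset.sum_congr rfl fun i _ => integral_finset_sum _ fun j _ => hintL i j
    _ = (∑ i, ∑ j, ∫ ω, a i j (x ω) * S (x ω) i j ∂μ) + ∫ ω, ℓ (x ω) ∂μ := by
        congr 1
        refine Finset.sum_congr rfl fun i _ => Finset.sum_congr rfl fun j _ => ?_
        exact pullout μ x hx _ (hyij i j) (fun t => S t i j) (hS i j) (a i j) (hameas i j)
          (n:ℝ) (fun t => habd i j t)
    _ = ∫ ω, ((∑ i, ∑ j, a i j (x ω) * S (x ω) i j) + ℓ (x ω)) ∂μ := by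
        rw [integral_add hintRsum hintl, integral_finset_sum _ (fun i _ =>
          integrable_finset_sum _ fun j _ => hintR i j)]
        congr 1
        exact (Finset.sum_congr rfl fun i _ => integral_finset_sum _ fun j _ => hintR i j).symm
    _ = ∫ ω in x ⁻¹' B,
          ((∑ i, ∑ j, (D (x ω))⁻¹ i j * S (x ω) i j) + Real.log (D (x ω)).det) ∂μ := by
        rw [← hRfun, integral_indicator (hx hB)]
  -- pointwise (in x) comparison from the matrix inequality
  have hpoint : ∀ᵐ ω ∂μ,
      ((∑ i, ∑ j, (S (x ω))⁻¹ i j * S (x ω) i j) + Real.log (S (x ω)).det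
        ≤ (∑ i, ∑ j, (C (x ω))⁻¹ i j * S (x ω) i j) + Real.log (C (x ω)).det) ∧
      ((∑ i, ∑ j, (C (x ω))⁻¹ i j * S (x ω) i j) + Real.log (C (x ω)).det
        = (∑ i, ∑ j, (S (x ω))⁻¹ i j * S (x ω) i j) + Real.log (S (x ω)).det
        → C (x ω) = S (x ω)) := by
    filter_upwards [hSpd, hCpd] with ω h1 h2
    have hkey := key_matrix h2 h1
    have htr1 : (∑ i, ∑ j, (C (x ω))⁻¹ i j * S (x ω) i j) = ((C (x ω))⁻¹ * S (x ω)).trace :=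
      dsum_eq_trace _ _ h1.1
    have htr2 : (∑ i, ∑ j, (S (x ω))⁻¹ i j * S (x ω) i j) = (d : ℝ) := by
      rw [dsum_eq_trace _ _ h1.1, Matrix.nonsing_inv_mul _ h1.det_pos.ne'.isUnit]
      simp [Matrix.trace_one]
    constructor
    · rw [htr1, htr2]
      exact hkey.1
    · intro he
      rw [htr1, htr2] at he
      exact hkey.2 he
  -- set-integral inequality on truncation-bounded sets
  have hineq : ∀ (B : Set 𝓧) (n : ℕ), MeasurableSet B → B ⊆ T n →
      ∫ ω in x ⁻¹' B, (y ω ⬝ᵥ ((S (x ω))⁻¹ *ᵥ y ω) + Real.log (S (x ω)).det) ∂μ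
        ≤ ∫ ω in x ⁻¹' B, (y ω ⬝ᵥ ((C (x ω))⁻¹ *ᵥ y ω) + Real.log (C (x ω)).det) ∂μ := by
    intro B n hB hBT
    have hcC := claim C hCinvE hlogC B hB n (fun t ht =>
      ⟨(hTbd n t (hBT ht)).1, (hTbd n t (hBT ht)).2.2.1, (hTbd n t (hBT ht)).2.2.2.1⟩)
    have hcS := claim S hSinvE hlogS B hB n (fun t ht =>
      ⟨(hTbd n t (hBT ht)).2.1, (hTbd n t (hBT ht)).2.2.1, (hTbd n t (hBT ht)).2.2.2.2⟩)
    rw [hcC, hcS]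
    have hIC : IntegrableOn
        (fun ω => (∑ i, ∑ j, (C (x ω))⁻¹ i j * S (x ω) i j) + Real.log (C (x ω)).det)
        (x ⁻¹' B) μ := by
      refine hgOn (fun t => (∑ i, ∑ j, (C t)⁻¹ i j * S t i j) + Real.log (C t).det)
        ((Finset.measurable_sum _ fun i _ => Finset.measurable_sum _ fun j _ =>
          (hCinvE i j).mul (hSent i j)).add hlogC) B hB ((d:ℝ) * d * ((n:ℝ) * n) + n) ?_
      intro t ht
      exact abs_gsum_bound _ _ (n:ℝ) (hTbd n t (hBT ht)).1 (hTbd n t (hBT ht)).2.2.1 _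
        (hTbd n t (hBT ht)).2.2.2.1
    have hIS : IntegrableOn
        (fun ω => (∑ i, ∑ j, (S (x ω))⁻¹ i j * S (x ω) i j) + Real.log (S (x ω)).det)
        (x ⁻¹' B) μ := by
      refine hgOn (fun t => (∑ i, ∑ j, (S t)⁻¹ i j * S t i j) + Real.log (S t).det)
        ((Finset.measurable_sum _ fun i _ => Finset.measurable_sum _ fun j _ =>
          (hSinvE i j).mul (hSent i j)).add hlogS) B hB ((d:ℝ) * d * ((n:ℝ) * n) + n) ?_
      intro t ht
      exact abs_gsum_bound _ _ (n:ℝ) (hTbd n t (hBT ht)).2.1 (hTbd n t (hBT ht)).2.2.1 _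
        (hTbd n t (hBT ht)).2.2.2.2
    exact integral_mono_ae hIS hIC (ae_restrict_of_ae (hpoint.mono fun ω h => h.1))
  -- limits along the truncation exhaustion
  have hpre : ∀ n, MeasurableSet (x ⁻¹' T n) := fun n => hx (hT n)
  have hUn : (⋃ n, x ⁻¹' T n) = Set.univ := by
    rw [← Set.preimage_iUnion, hTun, Set.preimage_univ]
  have hlimC : Filter.Tendsto
      (fun n => ∫ ω in x ⁻¹' T n, (y ω ⬝ᵥ ((C (x ω))⁻¹ *ᵥ y ω) + Real.log (C (x ω)).det) ∂μ)
      Filter.atTop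
      (nhds (∫ ω, (y ω ⬝ᵥ ((C (x ω))⁻¹ *ᵥ y ω) + Real.log (C (x ω)).det) ∂μ)) := by
    have h := tendsto_setIntegral_of_monotone hpre
      (fun a b hab => Set.preimage_mono (hTmono hab))
      (by rw [hUn]; exact integrableOn_univ.mpr hCint)
    rwa [hUn, setIntegral_univ] at h
  have hlimS : Filter.Tendsto
      (fun n => ∫ ω in x ⁻¹' T n, (y ω ⬝ᵥ ((S (x ω))⁻¹ *ᵥ y ω) + Real.log (S (x ω)).det) ∂μ)
      Filter.atTop
      (nhds (∫ ω, (y ω ⬝ᵥ ((S (x ω))⁻¹ *ᵥ y ω) + Real.log (S (x ω)).det) ∂μ)) := by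
    have h := tendsto_setIntegral_of_monotone hpre
      (fun a b hab => Set.preimage_mono (hTmono hab))
      (by rw [hUn]; exact integrableOn_univ.mpr hSint)
    rwa [hUn, setIntegral_univ] at h
  constructor
  · exact le_of_tendsto_of_tendsto' hlimS hlimC fun n => hineq (T n) n (hT n) subset_rfl
  · intro heq
    -- on each truncation set, the integrals of the conditional losses agree
    have hker : ∀ n : ℕ, ∀ᵐ ω ∂μ, ω ∈ x ⁻¹' T n →
        (∑ i, ∑ j, (C (x ω))⁻¹ i j * S (x ω) i j) + Real.log (C (x ω)).det
          = (∑ i, ∑ j, (S (x ω))⁻¹ i j * S (x ω) i j) + Real.log (S (x ω)).det := by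
      intro n
      -- complement inequality via a second exhaustion
      have hmono2 : Monotone fun m => x ⁻¹' (T m \ T n) := fun a b hab =>
        Set.preimage_mono fun t ht => ⟨hTmono hab ht.1, ht.2⟩
      have hset : (⋃ m, (T m \ T n)) = (T n)ᶜ := by
        ext t
        simp only [Set.mem_iUnion, Set.mem_diff, Set.mem_compl_iff]
        constructor
        · rintro ⟨m, _, h2⟩; exact h2
        · intro h2
          have hmem : t ∈ ⋃ m, T m := by rw [hTun]; trivial
          obtain ⟨m, hm⟩ := Set.mem_iUnion.mp hmem
          exact ⟨m, hm, h2⟩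
      have hun2 : (⋃ m, x ⁻¹' (T m \ T n)) = (x ⁻¹' T n)ᶜ := by
        rw [← Set.preimage_iUnion, hset, Set.preimage_compl]
      have hm2 : ∀ m : ℕ, MeasurableSet (x ⁻¹' (T m \ T n)) := fun m => hx ((hT m).diff (hT n))
      have h1C := tendsto_setIntegral_of_monotone hm2 hmono2
        (f := fun ω => y ω ⬝ᵥ ((C (x ω))⁻¹ *ᵥ y ω) + Real.log (C (x ω)).det)
        (by rw [hun2]; exact hCint.integrableOn)
      have h1S := tendsto_setIntegral_of_monotone hm2 hmono2
        (f := fun ω => y ω ⬝ᵥ ((S (x ω))⁻¹ *ᵥ y ω) + Real.log (S (x ω)).det)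
        (by rw [hun2]; exact hSint.integrableOn)
      rw [hun2] at h1C h1S
      have hcompl : ∫ ω in (x ⁻¹' T n)ᶜ, (y ω ⬝ᵥ ((S (x ω))⁻¹ *ᵥ y ω) + Real.log (S (x ω)).det) ∂μ
          ≤ ∫ ω in (x ⁻¹' T n)ᶜ, (y ω ⬝ᵥ ((C (x ω))⁻¹ *ᵥ y ω) + Real.log (C (x ω)).det) ∂μ :=
        le_of_tendsto_of_tendsto' h1S h1C fun m =>
          hineq (T m \ T n) m ((hT m).diff (hT n)) Set.diff_subset
      have htotC := integral_add_compl (hpre n) hCint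
      have htotS := integral_add_compl (hpre n) hSint
      have h1 := hineq (T n) n (hT n) subset_rfl
      have heqn : ∫ ω in x ⁻¹' T n, (y ω ⬝ᵥ ((C (x ω))⁻¹ *ᵥ y ω) + Real.log (C (x ω)).det) ∂μ
          = ∫ ω in x ⁻¹' T n, (y ω ⬝ᵥ ((S (x ω))⁻¹ *ᵥ y ω) + Real.log (S (x ω)).det) ∂μ := by
        linarith
      have hcC := claim C hCinvE hlogC (T n) (hT n) n (fun t ht =>
        ⟨(hTbd n t ht).1, (hTbd n t ht).2.2.1, (hTbd n t ht).2.2.2.1⟩)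
      have hcS := claim S hSinvE hlogS (T n) (hT n) n (fun t ht =>
        ⟨(hTbd n t ht).2.1, (hTbd n t ht).2.2.1, (hTbd n t ht).2.2.2.2⟩)
      rw [hcC, hcS] at heqn
      have hIC : IntegrableOn
          (fun ω => (∑ i, ∑ j, (C (x ω))⁻¹ i j * S (x ω) i j) + Real.log (C (x ω)).det)
          (x ⁻¹' T n) μ := by
        refine hgOn (fun t => (∑ i, ∑ j, (C t)⁻¹ i j * S t i j) + Real.log (C t).det)
          ((Finset.measurable_sum _ fun i _ => Finset.measurable_sum _ fun j _ =>
            (hCinvE i j).mul (hSent i j)).add hlogC) (T n) (hT n)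
          ((d:ℝ) * d * ((n:ℝ) * n) + n) ?_
        intro t ht
        exact abs_gsum_bound _ _ (n:ℝ) (hTbd n t ht).1 (hTbd n t ht).2.2.1 _
          (hTbd n t ht).2.2.2.1
      have hIS : IntegrableOn
          (fun ω => (∑ i, ∑ j, (S (x ω))⁻¹ i j * S (x ω) i j) + Real.log (S (x ω)).det)
          (x ⁻¹' T n) μ := by
        refine hgOn (fun t => (∑ i, ∑ j, (S t)⁻¹ i j * S t i j) + Real.log (S t).det)
          ((Finset.measurable_sum _ fun i _ => Finset.measurable_sum _ fun j _ =>
            (hSinvE i j).mul (hSent i j)).add hlogS) (T n) (hT n)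
          ((d:ℝ) * d * ((n:ℝ) * n) + n) ?_
        intro t ht
        exact abs_gsum_bound _ _ (n:ℝ) (hTbd n t ht).2.1 (hTbd n t ht).2.2.1 _
          (hTbd n t ht).2.2.2.2
      have hzero : ∫ ω in x ⁻¹' T n,
          (((∑ i, ∑ j, (C (x ω))⁻¹ i j * S (x ω) i j) + Real.log (C (x ω)).det)
            - ((∑ i, ∑ j, (S (x ω))⁻¹ i j * S (x ω) i j) + Real.log (S (x ω)).det)) ∂μ = 0 := by
        rw [integral_sub hIC hIS]
        linarith
      have hnn : 0 ≤ᵐ[μ.restrict (x ⁻¹' T n)] fun ω =>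
          ((∑ i, ∑ j, (C (x ω))⁻¹ i j * S (x ω) i j) + Real.log (C (x ω)).det)
            - ((∑ i, ∑ j, (S (x ω))⁻¹ i j * S (x ω) i j) + Real.log (S (x ω)).det) :=
        ae_restrict_of_ae (hpoint.mono fun ω h => sub_nonneg.mpr h.1)
      have hz2 := (integral_eq_zero_iff_of_nonneg_ae hnn (hIC.sub hIS)).mp hzero
      have hz3 := (ae_restrict_iff' (hpre n)).mp hz2
      filter_upwards [hz3] with ω hω hmem
      have := hω hmem
      simpa [sub_eq_zero] using this
    have hker' : ∀ᵐ ω ∂μ,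
        (∑ i, ∑ j, (C (x ω))⁻¹ i j * S (x ω) i j) + Real.log (C (x ω)).det
          = (∑ i, ∑ j, (S (x ω))⁻¹ i j * S (x ω) i j) + Real.log (S (x ω)).det := by
      filter_upwards [ae_all_iff.mpr hker] with ω hω
      have hmem : x ω ∈ ⋃ n, T n := by rw [hTun]; trivial
      obtain ⟨n, hn⟩ := Set.mem_iUnion.mp hmem
      exact hω n hn
    filter_upwards [hker', hpoint] with ω h1 h2
    exact h2.2 h1
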